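/- Let n ≥ 3 be an integer and m a nonnegative integer. There exists a constant A > 0, depending only on n and m, such that for every x ∈ H and every y' ∈ ℝ^{n−1} with |y'| > 1, writing s' = |x|/|y'|: if s' > 1 then |P_m(x,y')| ≤ A·(x_n/|x−(y',0)|ⁿ)·s'^{m+n−1}, and if s' ≤ 1 then |P_m(x,y')| ≤ A·(x_n/|x−(y',0)|ⁿ)·s'^{m}. -/

import Mathlib

set_option maxHeartbeats 1000000


open MeasureTheory Real ENNReal

noncomputable section

/-- `ES n` is Euclidean space `ℝⁿ`. Throughout, the ambient dimension is `n + 1`,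
so that the paper's dimension `n ≥ 3` corresponds to the hypothesis `2 ≤ n`. -/
abbrev ES (n : ℕ) := EuclideanSpace ℝ (Fin n)

/-- The last coordinate `x_n` of a point of `ℝ^{n+1}`. -/
def lastc {n : ℕ} (x : ES (n + 1)) : ℝ := x (Fin.last n)

/-- The open upper half space `H ⊆ ℝ^{n+1}`. -/
def hsp (n : ℕ) : Set (ES (n + 1)) := {x | 0 < lastc x}

/-- The embedding `y' ↦ (y', 0)` of the boundary `ℝⁿ` into `ℝ^{n+1}`. -/
def emb {n : ℕ} (y' : ES n) : ES (n + 1) :=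
  (EuclideanSpace.equiv (Fin (n + 1)) ℝ).symm (Fin.snoc (fun i => y' i) 0)

/-- Reflection `y* = (y', -y_n)` in the boundary hyperplane. -/
def reflB {n : ℕ} (y : ES (n + 1)) : ES (n + 1) :=
  (EuclideanSpace.equiv (Fin (n + 1)) ℝ).symm
    (Function.update (fun i => y i) (Fin.last n) (-(y (Fin.last n))))

/-- `ω_N = 2 π^{N/2} / Γ(N/2)`, the surface area of the unit sphere in `ℝ^N`. -/
def sArea (N : ℕ) : ℝ := 2 * π ^ ((N : ℝ) / 2) / Real.Gamma ((N : ℝ) / 2)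

/-- The Gegenbauer (ultraspherical) polynomial `C_k^λ(t)`, given by its explicit
formula; these are the coefficients of the generating function
`(1 - 2 t r + r²)^{-λ} = Σ_k C_k^λ(t) r^k`. -/
def gegen (lam : ℝ) (k : ℕ) (t : ℝ) : ℝ :=
  ∑ j ∈ Finset.range (k / 2 + 1),
    (-1 : ℝ) ^ j * Real.Gamma (lam + k - j) /
      (Real.Gamma lam * (Nat.factorial j) * (Nat.factorial (k - 2 * j))) * (2 * t) ^ (k - 2 * j)

/-- The Poisson kernel of the upper half space `H ⊆ ℝ^{n+1}`. -/
def pk (n : ℕ) (x : ES (n + 1)) (y' : ES n) : ℝ :=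
  2 * lastc x / (sArea (n + 1) * ‖x - emb y'‖ ^ (n + 1))

/-- The modified Poisson kernel of order `m` of the upper half space `H ⊆ ℝ^{n+1}`. -/
def mpk (n m : ℕ) (x : ES (n + 1)) (y' : ES n) : ℝ :=
  if ‖y'‖ ≤ 1 then pk n x y'
  else pk n x y' - ∑ k ∈ Finset.range m,
    (2 * lastc x * ‖x‖ ^ k) / (sArea (n + 1) * ‖y'‖ ^ (n + 1 + k)) *
      gegen (((n : ℝ) + 1) / 2) k ((inner ℝ x (emb y') : ℝ) / (‖x‖ * ‖y'‖))

namespace S12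


def acoef (lam : ℝ) (i : ℕ) : ℝ := Real.Gamma (lam + i) / (Real.Gamma lam * i.factorial)

lemma acoef_zero (lam : ℝ) (hl : 0 < lam) : acoef lam 0 = 1 := by
  have h := Real.Gamma_pos_of_pos hl
  simp [acoef, h.ne']

lemma acoef_pos (lam : ℝ) (hl : 0 < lam) (i : ℕ) : 0 < acoef lam i := by
  have h1 := Real.Gamma_pos_of_pos (show (0:ℝ) < lam + i by positivity)
  have h2 := Real.Gamma_pos_of_pos hl
  have h3 : (0:ℝ) < (i.factorial : ℝ) := Nat.cast_pos.mpr i.factorial_pos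
  exact div_pos h1 (by positivity)

lemma acoef_succ (lam : ℝ) (hl : 0 < lam) (i : ℕ) :
    acoef lam (i+1) * ((i:ℝ)+1) = acoef lam i * (lam + i) := by
  have hne : lam + (i:ℝ) ≠ 0 := by positivity
  have hΓ : Real.Gamma (lam + ((i:ℕ)+1:ℕ)) = (lam + i) * Real.Gamma (lam + i) := by
    have h' : lam + (((i:ℕ)+1:ℕ):ℝ) = (lam + i) + 1 := by push_cast; ring
    rw [h', Real.Gamma_add_one hne]
  have h2 : Real.Gamma lam ≠ 0 := (Real.Gamma_pos_of_pos hl).ne'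
  have h3 : ((i.factorial : ℕ):ℝ) ≠ 0 := Nat.cast_ne_zero.mpr i.factorial_pos.ne'
  unfold acoef
  rw [hΓ, Nat.factorial_succ]
  push_cast
  field_simp

lemma acoef_le (lam : ℝ) (hl : 0 < lam) (L : ℕ) (hL : lam ≤ L) (i : ℕ) :
    acoef lam i ≤ ((i:ℝ)+1)^L := by
  induction i with
  | zero => simp [acoef_zero lam hl]
  | succ i ih =>
      have hrec := acoef_succ lam hl i
      have hip : (0:ℝ) < (i:ℝ) + 1 := by positivity
      have hbern : 1 + (L:ℝ) * (1/((i:ℝ)+1)) ≤ (1 + 1/((i:ℝ)+1))^L :=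
        one_add_mul_le_pow (le_trans (by norm_num : (-2:ℝ) ≤ 0) (by positivity)) L
      have hplus : ((i:ℝ)+1) * (1 + 1/((i:ℝ)+1)) = (i:ℝ)+2 := by field_simp; ring
      have hpow : (((i:ℝ)+1)^L) * (1 + (L:ℝ)/((i:ℝ)+1)) ≤ ((i:ℝ)+2)^L := by
        calc (((i:ℝ)+1)^L) * (1 + (L:ℝ)/((i:ℝ)+1))
            ≤ (((i:ℝ)+1)^L) * (1 + 1/((i:ℝ)+1))^L := by
              apply mul_le_mul_of_nonneg_left _ (by positivity)
              calc 1 + (L:ℝ)/((i:ℝ)+1) = 1 + (L:ℝ) * (1/((i:ℝ)+1)) := by ring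
                _ ≤ (1 + 1/((i:ℝ)+1))^L := hbern
          _ = ((i:ℝ)+2)^L := by rw [← mul_pow, hplus]
      have hpos : 0 < acoef lam (i+1) := acoef_pos lam hl (i+1)
      have key : acoef lam (i+1) * ((i:ℝ)+1) ≤ (((i:ℝ)+1)^L) * ((i:ℝ)+1+(L:ℝ)) := by
        calc acoef lam (i+1) * ((i:ℝ)+1) = acoef lam i * (lam + i) := hrec
          _ ≤ (((i:ℝ)+1)^L) * (lam + i) := by
              apply mul_le_mul_of_nonneg_right ih (by positivity)
          _ ≤ (((i:ℝ)+1)^L) * ((i:ℝ)+1+(L:ℝ)) := by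
              apply mul_le_mul_of_nonneg_left (by nlinarith [hL]) (by positivity)
      have h2 : (((i:ℝ)+1)^L) * ((i:ℝ)+1+(L:ℝ)) = (((i:ℝ)+1)^L) * (1 + (L:ℝ)/((i:ℝ)+1)) * ((i:ℝ)+1) := by
        field_simp
      have : acoef lam (i+1) * ((i:ℝ)+1) ≤ ((i:ℝ)+2)^L * ((i:ℝ)+1) := by
        rw [h2] at key
        exact key.trans (mul_le_mul_of_nonneg_right hpow (by positivity))
      have hfin := le_of_mul_le_mul_right this hip
      have hc : ((i:ℝ)+2) = (((i+1:ℕ)):ℝ)+1 := by push_cast; ring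
      rw [hc] at hfin
      exact hfin


lemma summable_aux (L : ℕ) {r : ℝ} (h0 : 0 ≤ r) (hr : r < 1) :
    Summable (fun i : ℕ => ((i:ℝ)+1)^L * r ^ i) := by
  have h := summable_pow_mul_geometric_of_norm_lt_one (R := ℝ) L (r := r)
    (by rwa [Real.norm_eq_abs, abs_of_nonneg h0])
  have h2 : Summable (fun i : ℕ => ((i+1:ℕ):ℝ)^L * r ^ (i+1)) := (summable_nat_add_iff 1).mpr h
  have h3 : Summable (fun i : ℕ => r⁻¹ * (((i+1:ℕ):ℝ)^L * r ^ (i+1))) := h2.mul_left _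
  rcases eq_or_lt_of_le h0 with h0' | h0'
  · have hb : Summable (fun i : ℕ => if i = 0 then (1:ℝ) else 0) :=
      summable_of_ne_finset_zero (s := {0}) (by intro i hi; simp at hi; simp [hi])
    apply Summable.of_nonneg_of_le (fun i => by positivity) _ hb
    intro i
    cases i with
    | zero => simp
    | succ i => simp [← h0', zero_pow (Nat.succ_ne_zero i)]
  · have hne : r ≠ 0 := ne_of_gt h0'
    apply h3.congr
    intro i
    push_cast
    rw [pow_succ]
    field_simp

lemma hasSum_binomial (lam : ℝ) (hl : 0 < lam) {u : ℝ} (hu : |u| < 1/2) :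
    HasSum (fun i => acoef lam i * u ^ i) ((1 - u) ^ (-lam)) := by
  obtain ⟨L, hL⟩ := exists_nat_ge lam
  set t : Set ℝ := Set.Ioo (-(3/4) : ℝ) (3/4) with ht
  have hto : IsOpen t := isOpen_Ioo
  have htc : IsPreconnected t := (convex_Ioo _ _).isPreconnected
  set g : ℕ → ℝ → ℝ := fun i y => acoef lam i * y ^ i with hg_def
  set g' : ℕ → ℝ → ℝ := fun i y => acoef lam i * ((i:ℝ) * y ^ (i-1)) with hg'_def
  set U : ℕ → ℝ := fun i => ((i:ℝ)+1)^L * (((i:ℝ)+1) * ((4/3) * (3/4) ^ i)) with hU_def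
  have hU : Summable U := by
    have := summable_aux (L+1) (r := (3/4:ℝ)) (by norm_num) (by norm_num)
    apply (this.mul_left (4/3)).congr
    intro i
    simp only [hU_def]
    ring
  have hg : ∀ i y, HasDerivAt (g i) (g' i y) y := by
    intro i y
    simp only [hg_def, hg'_def]
    exact (hasDerivAt_pow i y).const_mul (acoef lam i)
  have hgb : ∀ i y, y ∈ t → ‖g' i y‖ ≤ U i := by
    intro i y hy
    have hy' : |y| ≤ 3/4 := by
      rw [abs_le]; exact ⟨hy.1.le, hy.2.le⟩
    have hpos := acoef_pos lam hl i
    have h34 : (3/4:ℝ)^(i-1) ≤ (4/3) * (3/4)^i := by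
      cases i with
      | zero => norm_num
      | succ i => rw [Nat.succ_sub_one, pow_succ]; ring_nf; nlinarith [pow_nonneg (by norm_num : (0:ℝ) ≤ 3/4) i]
    have : ‖g' i y‖ = acoef lam i * ((i:ℝ) * |y| ^ (i-1)) := by
      simp [hg'_def, abs_of_nonneg hpos.le, abs_mul, abs_pow, Nat.abs_cast]
    rw [this, hU_def]
    have h1 : |y|^(i-1) ≤ (3/4:ℝ)^(i-1) := pow_le_pow_left₀ (abs_nonneg y) hy' _
    have h2 : acoef lam i ≤ ((i:ℝ)+1)^L := acoef_le lam hl L hL i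
    have h3 : (i:ℝ) ≤ (i:ℝ)+1 := by linarith
    exact mul_le_mul h2 (mul_le_mul h3 (h1.trans h34) (by positivity) (by positivity))
      (by positivity) (by positivity)
  have hg0 : Summable fun i => g i 0 := by
    apply summable_of_ne_finset_zero (s := {0})
    intro i hi
    simp at hi
    simp [hg_def, zero_pow hi]
  have h0t : (0:ℝ) ∈ t := by constructor <;> norm_num
  have hsum : ∀ y ∈ t, Summable fun i => g i y := fun y hy =>
    summable_of_summable_hasDerivAt_of_isPreconnected hU hto htc
      (fun i y _ => hg i y) hgb h0t hg0 hy
  have hderiv : ∀ y ∈ t, HasDerivAt (fun z => ∑' i, g i z) (∑' i, g' i y) y := fun y hy =>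
    hasDerivAt_tsum_of_isPreconnected hU hto htc (fun i y _ => hg i y) hgb h0t hg0 hy
  have hDsum : ∀ y ∈ t, Summable fun i => g' i y := fun y hy =>
    Summable.of_norm_bounded hU (fun i => hgb i y hy)
  -- the ODE
  have hODE : ∀ y ∈ t, (1 - y) * (∑' i, g' i y) = lam * (∑' i, g i y) := by
    intro y hy
    have hS := hsum y hy
    have hD := hDsum y hy
    have hip : ∀ i : ℕ, (i:ℝ) * y ^ (i-1) * y = (i:ℝ) * y ^ i := by
      intro i
      cases i with
      | zero => simp
      | succ i => rw [Nat.succ_sub_one, pow_succ]; push_cast; ring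
    have hstep : ∀ i, g' (i+1) y = lam * g i y + y * g' i y := by
      intro i
      have hrec := acoef_succ lam hl i
      simp only [hg'_def, hg_def, Nat.add_sub_cancel]
      push_cast
      linear_combination y ^ i * hrec - acoef lam i * hip i
    have hshift : (∑' i, g' i y) = ∑' i, g' (i+1) y := by
      rw [hD.tsum_eq_zero_add]
      simp [hg'_def]
    have hD1 : Summable fun i => lam * g i y := hS.mul_left _
    have hD2 : Summable fun i => y * g' i y := hD.mul_left _
    have : (∑' i, g' i y) = lam * (∑' i, g i y) + y * (∑' i, g' i y) := by
      nth_rewrite 1 [hshift]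
      calc (∑' i, g' (i+1) y) = ∑' i, (lam * g i y + y * g' i y) := by
            exact tsum_congr hstep
        _ = (∑' i, lam * g i y) + ∑' i, y * g' i y := hD1.tsum_add hD2
        _ = lam * (∑' i, g i y) + y * (∑' i, g' i y) := by
            rw [tsum_mul_left, tsum_mul_left]
    linarith [this]
  -- constancy of h(y)*(1-y)^lam
  set φ := fun y : ℝ => (∑' i, g i y) * (1 - y) ^ lam with hφ_def
  have hφd : ∀ y ∈ t, HasDerivAt φ 0 y := by
    intro y hy
    have h1y : (0:ℝ) < 1 - y := by have := hy.2; simp only [ht, Set.mem_Ioo] at hy; linarith [hy.2]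
    have hpow : HasDerivAt (fun z : ℝ => (1 - z) ^ lam) (lam * (1-y) ^ (lam - 1) * (-1)) y := by
      have hbase : HasDerivAt (fun z : ℝ => 1 - z) (-1) y := (hasDerivAt_id y).const_sub 1
      have := (Real.hasDerivAt_rpow_const (x := 1 - y) (p := lam) (Or.inl h1y.ne')).comp y hbase
      exact this
    have hmul := (hderiv y hy).mul hpow
    have heq : (∑' i, g' i y) * (1-y) ^ lam + (∑' i, g i y) * (lam * (1-y) ^ (lam-1) * (-1)) = 0 := by
      have hsplit : (1-y) ^ lam = (1-y) ^ (lam - 1) * (1 - y) := by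
        rw [show lam = (lam - 1) + 1 by ring, Real.rpow_add h1y, Real.rpow_one]
        ring_nf
      rw [hsplit]
      have := hODE y hy
      nlinarith [this, Real.rpow_nonneg h1y.le (lam - 1)]
    rw [heq] at hmul
    exact hmul
  have hconst : ∀ y ∈ t, φ y = φ 0 := by
    intro y hy
    simp only [ht, Set.mem_Ioo] at hy
    obtain ⟨hy1, hy2⟩ := hy
    rcases le_or_gt 0 y with h0y | h0y
    · have := constant_of_has_deriv_right_zero (f := φ) (a := 0) (b := y)
        (fun z hz => by
          have hzt : z ∈ t := by
            simp only [ht, Set.mem_Ioo]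
            exact ⟨by linarith [hz.1], by linarith [hz.2]⟩
          exact (hφd z hzt).continuousAt.continuousWithinAt)
        (fun z hz => by
          have hzt : z ∈ t := by
            simp only [ht, Set.mem_Ioo]
            exact ⟨by linarith [hz.1], by linarith [hz.2.le]⟩
          exact (hφd z hzt).hasDerivWithinAt)
      exact this y (Set.right_mem_Icc.mpr h0y)
    · have := constant_of_has_deriv_right_zero (f := φ) (a := y) (b := 0)
        (fun z hz => by
          have hzt : z ∈ t := by
            simp only [ht, Set.mem_Ioo]
            exact ⟨by linarith [hz.1], by linarith [hz.2]⟩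
          exact (hφd z hzt).continuousAt.continuousWithinAt)
        (fun z hz => by
          have hzt : z ∈ t := by
            simp only [ht, Set.mem_Ioo]
            exact ⟨by linarith [hz.1], by linarith [hz.2.le]⟩
          exact (hφd z hzt).hasDerivWithinAt)
      exact (this 0 (Set.right_mem_Icc.mpr h0y.le)).symm
  have hφ0 : φ 0 = 1 := by
    have h0 : (∑' i, g i 0) = 1 := by
      rw [tsum_eq_single 0 (fun i hi => by simp [hg_def, zero_pow hi])]
      simp [hg_def, acoef_zero lam hl]
    simp [hφ_def, h0]
  -- conclude
  have hut : u ∈ t := ⟨by cases abs_lt.mp hu; linarith, by cases abs_lt.mp hu; linarith⟩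
  have h1u : (0:ℝ) < 1 - u := by have := (abs_lt.mp hu).2; linarith
  have hval : (∑' i, g i u) = (1 - u) ^ (-lam) := by
    have h := hconst u hut
    rw [hφ0] at h
    have hpow_pos : (0:ℝ) < (1-u) ^ lam := Real.rpow_pos_of_pos h1u lam
    have : (∑' i, g i u) = ((1-u) ^ lam)⁻¹ := by
      field_simp [hφ_def] at h ⊢
      linarith [h]
    rw [this, ← Real.rpow_neg h1u.le]
  have := (hsum u hut).hasSum
  rwa [hval] at this


lemma choose_le_two_pow (n j : ℕ) : (n.choose j) ≤ 2^n := by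
  rcases le_or_gt j n with h | h
  · calc n.choose j ≤ ∑ i ∈ Finset.range (n+1), n.choose i :=
        Finset.single_le_sum (fun i _ => Nat.zero_le _) (Finset.mem_range.mpr (Nat.lt_succ_of_le h))
      _ = 2^n := Nat.sum_range_choose n
  · rw [Nat.choose_eq_zero_of_lt h]; exact Nat.zero_le _

lemma Gamma_ratio_le (lam : ℝ) (hl : 0 < lam) (M : ℕ) :
    Real.Gamma (lam + M) ≤ Real.Gamma lam * (lam+1)^M * M.factorial := by
  induction M with
  | zero => simp
  | succ M ih =>
    have hne : lam + (M:ℝ) ≠ 0 := by positivity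
    have h1 : Real.Gamma (lam + ((M+1:ℕ):ℝ)) = (lam + M) * Real.Gamma (lam + M) := by
      have h' : lam + ((M+1:ℕ):ℝ) = (lam + M) + 1 := by push_cast; ring
      rw [h', Real.Gamma_add_one hne]
    have hMp : (0:ℝ) < lam + M := by positivity
    have hGp : 0 < Real.Gamma (lam + M) := Real.Gamma_pos_of_pos hMp
    have h2 : (lam + (M:ℝ)) ≤ (lam+1) * ((M:ℝ)+1) := by nlinarith [Nat.cast_nonneg (α := ℝ) M]
    calc Real.Gamma (lam + ((M+1:ℕ):ℝ)) = (lam + M) * Real.Gamma (lam + M) := h1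
      _ ≤ ((lam+1) * ((M:ℝ)+1)) * (Real.Gamma lam * (lam+1)^M * M.factorial) := by
          apply mul_le_mul h2 ih hGp.le (by positivity)
      _ = Real.Gamma lam * (lam+1)^(M+1) * ((M+1).factorial) := by
          rw [Nat.factorial_succ, pow_succ]; push_cast; ring

lemma gegen_bound (lam : ℝ) (hl : 1 ≤ lam) (k : ℕ) {t : ℝ} (ht : |t| ≤ 1) :
    |gegen lam k t| ≤ (8*(lam+1))^k := by
  have hl0 : 0 < lam := by linarith
  have hΓl : 0 < Real.Gamma lam := Real.Gamma_pos_of_pos hl0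
  have hterm : ∀ j ∈ Finset.range (k/2+1),
      |(-1 : ℝ) ^ j * Real.Gamma (lam + k - j) /
        (Real.Gamma lam * (Nat.factorial j) * (Nat.factorial (k - 2 * j))) * (2 * t) ^ (k - 2 * j)|
      ≤ (lam+1)^k * 4^k := by
    intro j hj
    have hj2 : 2*j ≤ k := by
      have := Finset.mem_range.mp hj
      omega
    have hjk : j ≤ k := by omega
    have hjkj : j ≤ k - j := by omega
    have hcast : lam + (k:ℝ) - (j:ℝ) = lam + ((k-j:ℕ):ℝ) := by
      push_cast [Nat.cast_sub hjk]; ring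
    have hΓ : 0 < Real.Gamma (lam + (k:ℝ) - (j:ℝ)) := by
      rw [hcast]; exact Real.Gamma_pos_of_pos (by positivity)
    have hfj : (0:ℝ) < (Nat.factorial j : ℝ) := Nat.cast_pos.mpr (Nat.factorial_pos j)
    have hfk : (0:ℝ) < (Nat.factorial (k-2*j) : ℝ) := Nat.cast_pos.mpr (Nat.factorial_pos _)
    have habs : |(-1 : ℝ) ^ j * Real.Gamma (lam + k - j) /
        (Real.Gamma lam * (Nat.factorial j) * (Nat.factorial (k - 2 * j))) * (2 * t) ^ (k - 2 * j)|
        = Real.Gamma (lam + k - j) /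
        (Real.Gamma lam * (Nat.factorial j) * (Nat.factorial (k - 2 * j))) * |2 * t| ^ (k - 2 * j) := by
      rw [abs_mul, abs_div, abs_mul, abs_pow, abs_pow, abs_neg, abs_one, one_pow, one_mul,
        abs_of_pos hΓ, abs_mul, abs_mul, abs_of_pos hΓl, Nat.abs_cast, Nat.abs_cast]
    rw [habs]
    have h2t : |2*t| ^ (k-2*j) ≤ 2^k := by
      calc |2*t| ^ (k-2*j) ≤ 2^(k-2*j) := by
            apply pow_le_pow_left₀ (abs_nonneg _)
            rw [abs_mul]; simp only [abs_two]
            nlinarith [ht, abs_nonneg t]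
        _ ≤ 2^k := pow_le_pow_right₀ one_le_two (by omega)
    have hfact : ((k-j).factorial : ℝ) =
        ((k-j).choose j : ℝ) * (j.factorial : ℝ) * ((k-2*j).factorial : ℝ) := by
      have h := Nat.choose_mul_factorial_mul_factorial hjkj
      have h2 : k - j - j = k - 2*j := by omega
      rw [h2] at h
      exact_mod_cast h.symm
    have hratio : Real.Gamma (lam + k - j) /
        (Real.Gamma lam * (Nat.factorial j) * (Nat.factorial (k - 2 * j)))
        ≤ (lam+1)^k * 2^k := by
      have hG := Gamma_ratio_le lam hl0 (k-j)
      rw [← hcast] at hG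
      have hch : ((k-j).choose j : ℝ) ≤ 2^k := by
        calc ((k-j).choose j : ℝ) ≤ ((2^(k-j) : ℕ) : ℝ) := by
              exact_mod_cast choose_le_two_pow (k-j) j
          _ ≤ 2^k := by
              rw [Nat.cast_pow]
              exact pow_le_pow_right₀ (by norm_num) (by omega)
      have hpl : (lam+1)^(k-j) ≤ (lam+1)^k := pow_le_pow_right₀ (by linarith) (by omega)
      calc Real.Gamma (lam + k - j) /
          (Real.Gamma lam * (Nat.factorial j) * (Nat.factorial (k - 2 * j)))
          ≤ (Real.Gamma lam * (lam+1)^(k-j) * ((k-j).factorial : ℝ)) /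
            (Real.Gamma lam * (Nat.factorial j) * (Nat.factorial (k - 2 * j))) := by
            have hD : (0:ℝ) < Real.Gamma lam * (Nat.factorial j) * (Nat.factorial (k - 2 * j)) := by
              positivity
            gcongr
        _ = (lam+1)^(k-j) * ((k-j).choose j : ℝ) := by
            rw [hfact]; field_simp
        _ ≤ (lam+1)^k * 2^k := by
            apply mul_le_mul hpl hch (Nat.cast_nonneg _) (by positivity)
    calc Real.Gamma (lam + k - j) /
        (Real.Gamma lam * (Nat.factorial j) * (Nat.factorial (k - 2 * j))) * |2 * t| ^ (k - 2 * j)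
        ≤ ((lam+1)^k * 2^k) * 2^k := by
          apply mul_le_mul hratio h2t (by positivity) (by positivity)
      _ = (lam+1)^k * 4^k := by
          rw [mul_assoc, ← mul_pow]
          norm_num
  calc |gegen lam k t| ≤ ∑ j ∈ Finset.range (k/2+1),
        |(-1 : ℝ) ^ j * Real.Gamma (lam + k - j) /
        (Real.Gamma lam * (Nat.factorial j) * (Nat.factorial (k - 2 * j))) * (2 * t) ^ (k - 2 * j)| :=
        Finset.abs_sum_le_sum_abs _ _
    _ ≤ ∑ j ∈ Finset.range (k/2+1), (lam+1)^k * 4^k := Finset.sum_le_sum hterm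
    _ = ((k/2+1 : ℕ) : ℝ) * ((lam+1)^k * 4^k) := by
        rw [Finset.sum_const, Finset.card_range, nsmul_eq_mul]
    _ ≤ (2^k : ℝ) * ((lam+1)^k * 4^k) := by
        apply mul_le_mul_of_nonneg_right _ (by positivity)
        have h1 : k/2 + 1 ≤ 2^k := by
          have h2 : k < 2^k := Nat.lt_two_pow_self
          omega
        exact_mod_cast h1
    _ = (8*(lam+1))^k := by
        rw [show (8:ℝ)*(lam+1) = 2*((lam+1)*4) by ring, mul_pow, mul_pow]

lemma gegen_tsum (lam : ℝ) (hl : 1 ≤ lam) {t s : ℝ} (ht : |t| ≤ 1) (hs0 : 0 ≤ s)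
    (hs : s ≤ 1/5) :
    (∑' k, gegen lam k t * s ^ k) = (1 - (2*t*s - s^2)) ^ (-lam) := by
  have hl0 : 0 < lam := by linarith
  obtain ⟨L, hL⟩ := exists_nat_ge lam
  set u := 2*t*s - s^2 with hu_def
  have ht' := abs_le.mp ht
  have hub : |u| ≤ s*(2+s) := by
    have h1 : u = s*(2*t - s) := by rw [hu_def]; ring
    rw [h1, abs_mul, abs_of_nonneg hs0]
    apply mul_le_mul_of_nonneg_left _ hs0
    rw [abs_le]
    constructor <;> nlinarith [ht'.1, ht'.2]
  have huu : |u| < 1/2 := lt_of_le_of_lt hub (by nlinarith)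
  have hbin := hasSum_binomial lam hl0 huu
  -- the double-indexed family
  set F : ℕ × ℕ → ℝ := fun p => if p.2 ≤ p.1 then
    acoef lam p.1 * (p.1.choose p.2) * (2*t)^(p.1-p.2) * (-1:ℝ)^p.2 * s^(p.1+p.2) else 0 with hF_def
  set Fb : ℕ × ℕ → ℝ := fun p => if p.2 ≤ p.1 then
    acoef lam p.1 * (p.1.choose p.2) * 2^(p.1-p.2) * s^(p.1+p.2) else 0 with hFb_def
  have hFb0 : ∀ p, 0 ≤ Fb p := by
    intro p
    simp only [hFb_def]
    split
    · have := acoef_pos lam hl0 p.1; positivity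
    · exact le_refl 0
  have habsF : ∀ p, |F p| ≤ Fb p := by
    intro p
    simp only [hF_def, hFb_def]
    split
    · rw [abs_mul, abs_mul, abs_mul, abs_mul, abs_pow, abs_pow, abs_pow, abs_neg, abs_one,
        one_pow, mul_one, abs_of_pos (acoef_pos lam hl0 p.1), Nat.abs_cast,
        abs_of_nonneg hs0]
      apply mul_le_mul_of_nonneg_right _ (by positivity)
      apply mul_le_mul_of_nonneg_left _
        (mul_nonneg (acoef_pos lam hl0 p.1).le (Nat.cast_nonneg _))
      apply pow_le_pow_left₀ (abs_nonneg _)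
      rw [abs_mul, abs_two]
      linarith [ht]
    · simp
  have hrowFb : ∀ i : ℕ, ∀ j ∉ Finset.range (i+1), Fb (i, j) = 0 := by
    intro i j hj
    simp only [Finset.mem_range] at hj
    simp only [hFb_def]
    rw [if_neg (by omega)]
  have hrowF0 : ∀ i : ℕ, ∀ j ∉ Finset.range (i+1), F (i, j) = 0 := by
    intro i j hj
    simp only [Finset.mem_range] at hj
    simp only [hF_def]
    rw [if_neg (by omega)]
  have hrowFbsum : ∀ i : ℕ, Summable fun j => Fb (i, j) :=
    fun i => summable_of_ne_finset_zero (s := Finset.range (i+1)) (hrowFb i)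
  have hrowFbval : ∀ i : ℕ, (∑' j, Fb (i, j)) = acoef lam i * (s*(2+s))^i := by
    intro i
    rw [tsum_eq_sum (hrowFb i)]
    have hexp : (s*(2+s))^i = s^i * (s+2)^i := by rw [mul_pow]; ring_nf
    rw [hexp, add_pow]
    rw [Finset.mul_sum, Finset.mul_sum]
    apply Finset.sum_congr rfl
    intro j hj
    have hji : j ≤ i := by simpa [Nat.lt_succ_iff] using Finset.mem_range.mp hj
    simp only [hFb_def]
    rw [if_pos hji, pow_add]
    ring
  have hFbsum : Summable Fb := by
    rw [summable_prod_of_nonneg hFb0]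
    refine ⟨hrowFbsum, ?_⟩
    refine Summable.of_nonneg_of_le (fun i => tsum_nonneg (fun j => hFb0 (i, j))) (fun i => ?_)
      (summable_aux L (r := 1/2) (by norm_num) (by norm_num))
    rw [hrowFbval i]
    have h1 : acoef lam i ≤ ((i:ℝ)+1)^L := acoef_le lam hl0 L hL i
    have h2 : (s*(2+s))^i ≤ (1/2:ℝ)^i := by
      apply pow_le_pow_left₀ (by positivity)
      nlinarith
    exact mul_le_mul h1 h2 (by positivity) (by positivity)
  have hFsum : Summable F :=
    (hFbsum.of_nonneg_of_le (fun p => abs_nonneg _) habsF).of_abs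
  have hrowFsum : ∀ i : ℕ, Summable fun j => F (i, j) :=
    fun i => summable_of_ne_finset_zero (s := Finset.range (i+1)) (hrowF0 i)
  have hrowFval : ∀ i : ℕ, (∑' j, F (i, j)) = acoef lam i * u ^ i := by
    intro i
    rw [tsum_eq_sum (hrowF0 i)]
    have hexp : u ^ i = s^i * ((-s) + 2*t)^i := by
      rw [← mul_pow]
      congr 1
      rw [hu_def]; ring
    rw [hexp, add_pow]
    rw [Finset.mul_sum, Finset.mul_sum]
    apply Finset.sum_congr rfl
    intro j hj
    have hji : j ≤ i := by simpa [Nat.lt_succ_iff] using Finset.mem_range.mp hj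
    simp only [hF_def]
    rw [if_pos hji, pow_add, neg_pow]
    ring
  have hFtot : ∑' p, F p = (1-u)^(-lam) := by
    rw [hFsum.tsum_prod' hrowFsum, tsum_congr hrowFval, hbin.tsum_eq]
  -- regroup along diagonals
  set e : ℕ × ℕ → ℕ × ℕ := fun p => (p.1 + p.2, p.2) with he_def
  have he : Function.Injective e := by
    intro p q h
    simp only [he_def, Prod.mk.injEq] at h
    obtain ⟨h1, h2⟩ := h
    exact Prod.ext (by omega) h2
  set G : ℕ × ℕ → ℝ := fun q => if 2*q.2 ≤ q.1 then F (q.1 - q.2, q.2) else 0 with hG_def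
  have hGe : ∀ p, G (e p) = F p := by
    intro p
    by_cases h : p.2 ≤ p.1
    · simp only [hG_def, he_def]
      rw [if_pos (by omega)]
      congr 1
      exact Prod.ext (by omega) rfl
    · simp only [hG_def, he_def]
      rw [if_neg (by omega)]
      simp only [hF_def]
      rw [if_neg h]
  have hGsupp : ∀ q ∉ Set.range e, G q = 0 := by
    intro q hq
    by_cases h : 2*q.2 ≤ q.1
    · exfalso
      exact hq ⟨(q.1 - q.2, q.2), Prod.ext (by simp [he_def]; omega) rfl⟩
    · simp only [hG_def]
      rw [if_neg h]
  have hGF : (G ∘ e) = F := funext hGe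
  have hGsum : Summable G := by
    rw [← he.summable_iff hGsupp, hGF]
    exact hFsum
  have hGtot : ∑' q, G q = ∑' p, F p := by
    rw [← he.tsum_eq (Function.support_subset_iff'.mpr hGsupp)]
    exact tsum_congr hGe
  have hcol0 : ∀ k : ℕ, ∀ j ∉ Finset.range (k/2+1), G (k, j) = 0 := by
    intro k j hj
    simp only [Finset.mem_range] at hj
    simp only [hG_def]
    rw [if_neg (by omega)]
  have hcolsum : ∀ k : ℕ, Summable fun j => G (k, j) :=
    fun k => summable_of_ne_finset_zero (s := Finset.range (k/2+1)) (hcol0 k)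
  have hcolval : ∀ k : ℕ, (∑' j, G (k, j)) = gegen lam k t * s ^ k := by
    intro k
    rw [tsum_eq_sum (hcol0 k)]
    unfold gegen
    rw [Finset.sum_mul]
    apply Finset.sum_congr rfl
    intro j hj
    have hj2 : 2*j ≤ k := by
      have := Finset.mem_range.mp hj
      omega
    have hjk : j ≤ k := by omega
    have hjkj : j ≤ k - j := by omega
    simp only [hG_def]
    rw [if_pos hj2]
    simp only [hF_def]
    rw [if_pos hjkj]
    have h1 : k - j - j = k - 2*j := by omega
    have h2 : k - j + j = k := by omega
    rw [h1, h2]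
    have hcast : lam + (k:ℝ) - (j:ℝ) = lam + ((k-j:ℕ):ℝ) := by
      push_cast [Nat.cast_sub hjk]; ring
    have hfact : ((k-j).factorial : ℝ) =
        ((k-j).choose j : ℝ) * (j.factorial : ℝ) * ((k-2*j).factorial : ℝ) := by
      have h := Nat.choose_mul_factorial_mul_factorial hjkj
      rw [h1] at h
      exact_mod_cast h.symm
    have hΓl : Real.Gamma lam ≠ 0 := (Real.Gamma_pos_of_pos hl0).ne'
    have hfj : ((j.factorial : ℕ):ℝ) ≠ 0 := Nat.cast_ne_zero.mpr (Nat.factorial_pos j).ne'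
    have hfk : (((k-2*j).factorial : ℕ):ℝ) ≠ 0 := Nat.cast_ne_zero.mpr (Nat.factorial_pos _).ne'
    have hfkj : (((k-j).factorial : ℕ):ℝ) ≠ 0 := Nat.cast_ne_zero.mpr (Nat.factorial_pos _).ne'
    have hchne : (((k-j).choose j : ℕ):ℝ) ≠ 0 := Nat.cast_ne_zero.mpr (Nat.choose_pos hjkj).ne'
    have e1 : acoef lam (k-j) * (((k-j).choose j : ℕ):ℝ) =
        Real.Gamma (lam + ((k-j:ℕ):ℝ)) /
          (Real.Gamma lam * ((j.factorial : ℕ):ℝ) * (((k-2*j).factorial : ℕ):ℝ)) := by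
      unfold acoef
      rw [hfact]
      field_simp
    calc acoef lam (k-j) * (((k-j).choose j : ℕ):ℝ) * (2*t)^(k-2*j) * (-1:ℝ)^j * s^k
        = (acoef lam (k-j) * (((k-j).choose j : ℕ):ℝ)) * ((2*t)^(k-2*j) * (-1:ℝ)^j * s^k) := by
          ring
      _ = (Real.Gamma (lam + ((k-j:ℕ):ℝ)) /
          (Real.Gamma lam * ((j.factorial : ℕ):ℝ) * (((k-2*j).factorial : ℕ):ℝ))) *
          ((2*t)^(k-2*j) * (-1:ℝ)^j * s^k) := by rw [e1]
      _ = (-1:ℝ)^j * Real.Gamma (lam + (k:ℝ) - (j:ℝ)) /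
          (Real.Gamma lam * ((j.factorial : ℕ):ℝ) * (((k-2*j).factorial : ℕ):ℝ)) *
          (2*t)^(k-2*j) * s^k := by
          rw [hcast]
          ring
  calc (∑' k, gegen lam k t * s ^ k) = ∑' k, (∑' j, G (k, j)) := by
        rw [tsum_congr hcolval]
      _ = ∑' q, G q := (hGsum.tsum_prod' hcolsum).symm
      _ = (1-u)^(-lam) := by rw [hGtot, hFtot]

lemma lastc_emb {n : ℕ} (y' : ES n) : lastc (emb y') = 0 := by
  simp [lastc, emb, EuclideanSpace.equiv]

lemma lastc_sub {n : ℕ} (x z : ES (n+1)) : lastc (x - z) = lastc x - lastc z := rfl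

lemma norm_emb {n : ℕ} (y' : ES n) : ‖emb y'‖ = ‖y'‖ := by
  rw [EuclideanSpace.norm_eq, EuclideanSpace.norm_eq]
  congr 1
  rw [Fin.sum_univ_castSucc]
  have h1 : emb y' (Fin.last n) = 0 := lastc_emb y'
  have h2 : ∀ i : Fin n, emb y' (Fin.castSucc i) = y' i := by
    intro i
    simp [emb, EuclideanSpace.equiv]
  simp [h1, h2]

end S12

/-- Estimates for the modified Poisson kernel in the half space: with `s' = |x|/|y'|`,
`|P_m(x,y')| ≤ A (x_n/|x-(y',0)|^N) s'^{m+N-1}` if `s' > 1` and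
`|P_m(x,y')| ≤ A (x_n/|x-(y',0)|^N) s'^m` if `s' ≤ 1` (ambient dimension `N = n+1`). -/

theorem stmt_12 (n : ℕ) (hn : 2 ≤ n) (m : ℕ) :
    ∃ A > (0 : ℝ), ∀ x ∈ hsp n, ∀ y' : ES n, 1 < ‖y'‖ →
      (1 < ‖x‖ / ‖y'‖ →
        |mpk n m x y'| ≤ A * (lastc x / ‖x - emb y'‖ ^ (n + 1)) * (‖x‖ / ‖y'‖) ^ (m + n)) ∧
      (‖x‖ / ‖y'‖ ≤ 1 →
        |mpk n m x y'| ≤ A * (lastc x / ‖x - emb y'‖ ^ (n + 1)) * (‖x‖ / ‖y'‖) ^ m) := by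
  classical
  have hn2 : (2:ℝ) ≤ (n:ℝ) := by exact_mod_cast hn
  set lam : ℝ := ((n:ℝ)+1)/2 with hlam_def
  have hlam : 1 ≤ lam := by rw [hlam_def]; linarith
  have hlam0 : 0 < lam := by linarith
  set ρ : ℝ := 8*(lam+1) with hρ_def
  have hρ : 16 ≤ ρ := by rw [hρ_def]; linarith
  have hρ0 : 0 < ρ := by linarith
  have hρ1 : (1:ℝ) ≤ ρ := by linarith
  set ε : ℝ := 1/(2*ρ) with hε_def
  have hε0 : 0 < ε := by rw [hε_def]; positivity
  have hε5 : ε ≤ 1/5 := by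
    rw [hε_def, div_le_div_iff₀ (by positivity) (by norm_num)]
    linarith
  have hω : 0 < sArea (n+1) := by
    unfold sArea
    have h1 : (0:ℝ) < π ^ (((n+1:ℕ):ℝ)/2) := Real.rpow_pos_of_pos Real.pi_pos _
    have h2 : (0:ℝ) < Real.Gamma (((n+1:ℕ):ℝ)/2) := Real.Gamma_pos_of_pos (by positivity)
    positivity
  set C : ℝ := (2/sArea (n+1)) * (1 + (m:ℝ) * ρ^m * 2^(n+1)) with hC_def
  have hmρ : (0:ℝ) ≤ (m:ℝ) * ρ^m * 2^(n+1) := by positivity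
  have hC0 : 0 < C := by
    rw [hC_def]
    have h1 : (0:ℝ) < 2/sArea (n+1) := by positivity
    exact mul_pos h1 (by linarith)
  set A : ℝ := C + C * (2*ρ)^m + (4/sArea (n+1)) * 2^(n+1) * ρ^m with hA_def
  have h2ρm : (0:ℝ) < (2*ρ)^m := by positivity
  have hA3 : (0:ℝ) < (4/sArea (n+1)) * 2^(n+1) * ρ^m := by positivity
  have hA0 : 0 < A := by
    rw [hA_def]
    linarith [mul_pos hC0 h2ρm, hA3, hC0]
  refine ⟨A, hA0, ?_⟩
  intro x hx y' hY1
  have hlx : 0 < lastc x := hx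
  have hY0 : (0:ℝ) < ‖y'‖ := lt_trans one_pos hY1
  have hx0 : x ≠ 0 := by
    intro h
    rw [h] at hlx
    have h0 : lastc (0 : ES (n+1)) = 0 := rfl
    rw [h0] at hlx
    exact lt_irrefl 0 hlx
  have hX0 : (0:ℝ) < ‖x‖ := norm_pos_iff.mpr hx0
  have hd0 : (0:ℝ) < ‖x - emb y'‖ := by
    apply norm_pos_iff.mpr
    intro h
    have h2 : lastc (x - emb y') = 0 := by rw [h]; rfl
    rw [S12.lastc_sub, S12.lastc_emb] at h2
    linarith
  set Y := ‖y'‖ with hY_def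
  set X := ‖x‖ with hX_def
  set d := ‖x - emb y'‖ with hd_def
  set lx := lastc x with hlx_def
  set s := X/Y with hs_def
  have hs0 : 0 < s := div_pos hX0 hY0
  set t : ℝ := (inner ℝ x (emb y') : ℝ) / (X*Y) with ht_def
  have hipn : |(inner ℝ x (emb y') : ℝ)| ≤ X * Y := by
    calc |(inner ℝ x (emb y') : ℝ)| ≤ ‖x‖ * ‖emb y'‖ := abs_real_inner_le_norm x (emb y')
      _ = X * Y := by rw [S12.norm_emb]
  have ht1 : |t| ≤ 1 := by
    rw [ht_def, abs_div, abs_of_pos (mul_pos hX0 hY0)]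
    exact div_le_one_of_le₀ hipn (by positivity)
  have hd2 : d^2 = X^2 - 2*(inner ℝ x (emb y') : ℝ) + Y^2 := by
    rw [hd_def, hX_def, hY_def, ← S12.norm_emb y']
    exact norm_sub_sq_real x (emb y')
  have hq : 1 - (2*t*s - s^2) = d^2/Y^2 := by
    rw [eq_div_iff (by positivity : (Y:ℝ)^2 ≠ 0), hd2, ht_def, hs_def]
    field_simp
    ring
  have hdXY : d ≤ X + Y := by
    rw [hd_def, hX_def, hY_def, ← S12.norm_emb y']
    exact norm_sub_le x (emb y')
  have hmpk : mpk n m x y' = 2*lx/(sArea (n+1) * d^(n+1))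
      - ∑ k ∈ Finset.range m, (2*lx/(sArea (n+1) * Y^(n+1))) * (gegen lam k t * s^k) := by
    unfold mpk pk
    rw [if_neg (not_le.mpr hY1)]
    rw [← hX_def, ← hY_def, ← hlx_def, ← hd_def, ← hlam_def, ← ht_def]
    congr 1
    apply Finset.sum_congr rfl
    intro k _
    rw [hs_def, pow_add, div_pow]
    field_simp
  have hgb : ∀ k : ℕ, |gegen lam k t * s^k| ≤ ρ^k * s^k := by
    intro k
    rw [abs_mul, abs_pow, abs_of_pos hs0]
    apply mul_le_mul_of_nonneg_right _ (by positivity)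
    rw [hρ_def]
    exact S12.gegen_bound lam hlam k ht1
  have hco : 0 < 2*lx/(sArea (n+1) * Y^(n+1)) := by positivity
  have habs_sum : |∑ k ∈ Finset.range m, (2*lx/(sArea (n+1) * Y^(n+1))) * (gegen lam k t * s^k)|
      ≤ ∑ k ∈ Finset.range m, (2*lx/(sArea (n+1) * Y^(n+1))) * (ρ^k * s^k) := by
    calc |∑ k ∈ Finset.range m, (2*lx/(sArea (n+1) * Y^(n+1))) * (gegen lam k t * s^k)|
        ≤ ∑ k ∈ Finset.range m, |(2*lx/(sArea (n+1) * Y^(n+1))) * (gegen lam k t * s^k)| :=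
          Finset.abs_sum_le_sum_abs _ _
      _ ≤ ∑ k ∈ Finset.range m, (2*lx/(sArea (n+1) * Y^(n+1))) * (ρ^k * s^k) := by
          apply Finset.sum_le_sum
          intro k _
          rw [abs_mul, abs_of_pos hco]
          exact mul_le_mul_of_nonneg_left (hgb k) hco.le
  have habs_sub : ∀ a b : ℝ, |a - b| ≤ |a| + |b| := fun a b => by
    rw [sub_eq_add_neg]
    exact (abs_add_le a (-b)).trans_eq (by rw [abs_neg])
  have hpk_pos : 0 < 2*lx/(sArea (n+1) * d^(n+1)) := by positivity
  have hpk_eq : 2*lx/(sArea (n+1) * d^(n+1)) = (2/sArea (n+1))*(lx/d^(n+1)) := by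
    field_simp
  constructor
  · -- case 1 < s
    intro hs1
    have hYX : Y < X := by
      rw [hs_def] at hs1
      exact (one_lt_div hY0).mp hs1
    have hdX : d ≤ 2*X := by linarith
    have hs1' : (1:ℝ) ≤ s := le_of_lt hs1
    have hsY : s * Y = X := by
      rw [hs_def]
      field_simp
    have hYdN : 1/Y^(n+1) ≤ 2^(n+1) * s^(n+1) / d^(n+1) := by
      rw [div_le_div_iff₀ (by positivity) (by positivity), one_mul]
      calc d^(n+1) ≤ (2*X)^(n+1) := pow_le_pow_left₀ hd0.le hdX _
        _ = 2^(n+1) * (s*Y)^(n+1) := by rw [mul_pow, hsY]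
        _ = 2^(n+1) * s^(n+1) * Y^(n+1) := by rw [mul_pow]; ring
    have hterm2 : ∀ k ∈ Finset.range m, (2*lx/(sArea (n+1) * Y^(n+1))) * (ρ^k * s^k)
        ≤ (2/sArea (n+1)) * (ρ^m * 2^(n+1)) * (lx/d^(n+1)) * s^(m+n) := by
      intro k hk
      have hk' : k < m := Finset.mem_range.mp hk
      have e1 : (2*lx/(sArea (n+1) * Y^(n+1))) * (ρ^k * s^k)
          = (2/sArea (n+1)) * ρ^k * lx * (s^k * (1/Y^(n+1))) := by
        field_simp
      rw [e1]
      calc (2/sArea (n+1)) * ρ^k * lx * (s^k * (1/Y^(n+1)))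
          ≤ (2/sArea (n+1)) * ρ^k * lx * (s^k * (2^(n+1) * s^(n+1)/d^(n+1))) := by
            apply mul_le_mul_of_nonneg_left _ (by positivity)
            apply mul_le_mul_of_nonneg_left hYdN (by positivity)
        _ = (2/sArea (n+1)) * (ρ^k * 2^(n+1)) * (lx/d^(n+1)) * s^(k+(n+1)) := by
            rw [pow_add]
            ring
        _ ≤ (2/sArea (n+1)) * (ρ^m * 2^(n+1)) * (lx/d^(n+1)) * s^(m+n) := by
            apply mul_le_mul _ (pow_le_pow_right₀ hs1' (by omega)) (by positivity) (by positivity)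
            apply mul_le_mul_of_nonneg_right _ (by positivity)
            apply mul_le_mul_of_nonneg_left _ (by positivity)
            exact mul_le_mul_of_nonneg_right (pow_le_pow_right₀ hρ1 hk'.le) (by positivity)
    have hsm : (1:ℝ) ≤ s^(m+n) := by
      calc (1:ℝ) = 1^(m+n) := (one_pow _).symm
        _ ≤ s^(m+n) := pow_le_pow_left₀ (by norm_num) hs1' _
    rw [hmpk]
    calc |2*lx/(sArea (n+1)*d^(n+1))
          - ∑ k ∈ Finset.range m, (2*lx/(sArea (n+1) * Y^(n+1))) * (gegen lam k t * s^k)|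
        ≤ |2*lx/(sArea (n+1)*d^(n+1))|
          + |∑ k ∈ Finset.range m, (2*lx/(sArea (n+1) * Y^(n+1))) * (gegen lam k t * s^k)| :=
          habs_sub _ _
      _ ≤ 2*lx/(sArea (n+1)*d^(n+1))
          + ∑ k ∈ Finset.range m, (2*lx/(sArea (n+1) * Y^(n+1))) * (ρ^k * s^k) :=
          add_le_add (le_of_eq (abs_of_pos hpk_pos)) habs_sum
      _ ≤ (2/sArea (n+1)) * (lx/d^(n+1)) * s^(m+n)
          + (m:ℝ) * ((2/sArea (n+1)) * (ρ^m * 2^(n+1)) * (lx/d^(n+1)) * s^(m+n)) := by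
          apply add_le_add
          · rw [hpk_eq]
            exact le_mul_of_one_le_right (by positivity) hsm
          · calc ∑ k ∈ Finset.range m, (2*lx/(sArea (n+1) * Y^(n+1))) * (ρ^k * s^k)
                ≤ ∑ _k ∈ Finset.range m,
                    (2/sArea (n+1)) * (ρ^m * 2^(n+1)) * (lx/d^(n+1)) * s^(m+n) :=
                  Finset.sum_le_sum hterm2
              _ = (m:ℝ) * ((2/sArea (n+1)) * (ρ^m * 2^(n+1)) * (lx/d^(n+1)) * s^(m+n)) := by
                  rw [Finset.sum_const, Finset.card_range, nsmul_eq_mul]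
      _ = C * (lx/d^(n+1)) * s^(m+n) := by
          rw [hC_def]
          ring
      _ ≤ A * (lx/d^(n+1)) * s^(m+n) := by
          apply mul_le_mul_of_nonneg_right _ (by positivity)
          apply mul_le_mul_of_nonneg_right _ (by positivity)
          rw [hA_def]
          linarith [mul_pos hC0 h2ρm, hA3]
  · -- case s ≤ 1
    intro hs1
    have hXY : X ≤ Y := by
      rw [hs_def] at hs1
      exact (div_le_one hY0).mp hs1
    have hdY : d ≤ 2*Y := by linarith
    have hYd : 1/Y^(n+1) ≤ 2^(n+1)/d^(n+1) := by
      rw [div_le_div_iff₀ (by positivity) (by positivity), one_mul]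
      calc d^(n+1) ≤ (2*Y)^(n+1) := pow_le_pow_left₀ hd0.le hdY _
        _ = 2^(n+1) * Y^(n+1) := mul_pow _ _ _
    rcases le_or_gt s ε with hsε | hsε
    · -- small s : use the generating function identity
      have hf : ∀ k:ℕ, |gegen lam k t * s^k| ≤ (ρ*s)^k := by
        intro k
        calc |gegen lam k t * s^k| ≤ ρ^k * s^k := hgb k
          _ = (ρ*s)^k := (mul_pow ρ s k).symm
      have hρs : ρ*s ≤ 1/2 := by
        have h1 := mul_le_mul_of_nonneg_left hsε hρ0.le
        calc ρ*s ≤ ρ*ε := h1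
          _ = 1/2 := by
            rw [hε_def]
            field_simp
      have hρs0 : (0:ℝ) ≤ ρ*s := by positivity
      have hρs1 : ρ*s < 1 := lt_of_le_of_lt hρs (by norm_num)
      have hSabs : Summable (fun k => |gegen lam k t * s^k|) :=
        Summable.of_nonneg_of_le (fun k => abs_nonneg _) hf
          (summable_geometric_of_lt_one hρs0 hρs1)
      have hS : Summable (fun k => gegen lam k t * s^k) := hSabs.of_abs
      have hid : (∑' k, gegen lam k t * s^k) = Y^(n+1)/d^(n+1) := by
        rw [S12.gegen_tsum lam hlam ht1 hs0.le (le_trans hsε hε5), hq]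
        have h1 : d^2/Y^2 = (d/Y)^2 := (div_pow d Y 2).symm
        rw [h1, ← Real.rpow_natCast (d/Y) 2, ← Real.rpow_mul (by positivity : (0:ℝ) ≤ d/Y)]
        have h2 : ((2:ℕ):ℝ) * (-lam) = -((n+1:ℕ):ℝ) := by rw [hlam_def]; push_cast; ring
        rw [h2, Real.rpow_neg (by positivity : (0:ℝ) ≤ d/Y), Real.rpow_natCast, div_pow, inv_div]
      have hsplit := hS.sum_add_tsum_nat_add m
      have hmpk2 : mpk n m x y' = (2*lx/(sArea (n+1) * Y^(n+1)))
          * (∑' k, gegen lam (k+m) t * s^(k+m)) := by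
        rw [hmpk, ← Finset.mul_sum]
        have e3 : 2*lx/(sArea (n+1)*d^(n+1))
            = (2*lx/(sArea (n+1)*Y^(n+1))) * (Y^(n+1)/d^(n+1)) := by
          field_simp
        rw [e3, ← hid, ← hsplit]
        ring
      have htail : |∑' k, gegen lam (k+m) t * s^(k+m)| ≤ 2 * (ρ*s)^m := by
        have hg2 : Summable (fun k : ℕ => (ρ*s)^(k+m)) := by
          simp_rw [pow_add]
          exact (summable_geometric_of_lt_one hρs0 hρs1).mul_right _
        have hSa2 : Summable (fun k => |gegen lam (k+m) t * s^(k+m)|) :=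
          (summable_nat_add_iff m).mpr hSabs
        have h1 : |∑' k, gegen lam (k+m) t * s^(k+m)| ≤ ∑' k, (ρ*s)^(k+m) := by
          calc |∑' k, gegen lam (k+m) t * s^(k+m)|
              ≤ ∑' k, |gegen lam (k+m) t * s^(k+m)| := by
                rw [← Real.norm_eq_abs]
                apply norm_tsum_le_tsum_norm
                simpa only [Real.norm_eq_abs] using hSa2
            _ ≤ ∑' k, (ρ*s)^(k+m) := Summable.tsum_le_tsum (fun k => hf (k+m)) hSa2 hg2
        have h2 : (∑' k : ℕ, (ρ*s)^(k+m)) = (1-(ρ*s))⁻¹ * (ρ*s)^m := by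
          simp_rw [pow_add]
          rw [tsum_mul_right, tsum_geometric_of_lt_one hρs0 hρs1]
        have h3 : (1-(ρ*s))⁻¹ ≤ 2 := by
          have h4 : (1:ℝ)/2 ≤ 1 - ρ*s := by linarith
          calc (1-(ρ*s))⁻¹ ≤ ((1:ℝ)/2)⁻¹ := by
                apply inv_anti₀ (by norm_num) h4
            _ = 2 := by norm_num
        calc |∑' k, gegen lam (k+m) t * s^(k+m)| ≤ ∑' k, (ρ*s)^(k+m) := h1
          _ = (1-(ρ*s))⁻¹ * (ρ*s)^m := h2
          _ ≤ 2 * (ρ*s)^m := mul_le_mul_of_nonneg_right h3 (by positivity)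
      rw [hmpk2]
      calc |(2*lx/(sArea (n+1) * Y^(n+1))) * (∑' k, gegen lam (k+m) t * s^(k+m))|
          = (2*lx/(sArea (n+1) * Y^(n+1))) * |∑' k, gegen lam (k+m) t * s^(k+m)| := by
            rw [abs_mul, abs_of_pos hco]
        _ ≤ (2*lx/(sArea (n+1) * Y^(n+1))) * (2*(ρ*s)^m) :=
            mul_le_mul_of_nonneg_left htail hco.le
        _ = (4/sArea (n+1)) * ρ^m * lx * s^m * (1/Y^(n+1)) := by
            rw [mul_pow]
            field_simp
            ring
        _ ≤ (4/sArea (n+1)) * ρ^m * lx * s^m * (2^(n+1)/d^(n+1)) := by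
            apply mul_le_mul_of_nonneg_left hYd (by positivity)
        _ = ((4/sArea (n+1)) * 2^(n+1) * ρ^m) * (lx/d^(n+1)) * s^m := by
            ring
        _ ≤ A * (lx/d^(n+1)) * s^m := by
            apply mul_le_mul_of_nonneg_right _ (by positivity)
            apply mul_le_mul_of_nonneg_right _ (by positivity)
            rw [hA_def]
            linarith [hC0, mul_pos hC0 h2ρm]
    · -- medium s : termwise bounds
      have hsk1 : ∀ k : ℕ, s^k ≤ 1 := by
        intro k
        calc s^k ≤ 1^k := pow_le_pow_left₀ hs0.le hs1 k
          _ = 1 := one_pow k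
      have hone : (1:ℝ) ≤ (2*ρ)^m * s^m := by
        rw [← mul_pow]
        calc (1:ℝ) = 1^m := (one_pow m).symm
          _ ≤ (2*ρ*s)^m := by
            apply pow_le_pow_left₀ (by norm_num)
            rw [hε_def] at hsε
            rw [div_lt_iff₀ (by positivity)] at hsε
            linarith
      have hterm2 : ∀ k ∈ Finset.range m, (2*lx/(sArea (n+1) * Y^(n+1))) * (ρ^k * s^k)
          ≤ (2/sArea (n+1)) * (ρ^m * 2^(n+1)) * (lx/d^(n+1)) := by
        intro k hk
        have hk' : k < m := Finset.mem_range.mp hk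
        have e1 : (2*lx/(sArea (n+1) * Y^(n+1))) * (ρ^k * s^k)
            = (2/sArea (n+1)) * (ρ^k * s^k) * lx * (1/Y^(n+1)) := by
          field_simp
        rw [e1]
        calc (2/sArea (n+1)) * (ρ^k * s^k) * lx * (1/Y^(n+1))
            ≤ (2/sArea (n+1)) * (ρ^k * s^k) * lx * (2^(n+1)/d^(n+1)) := by
              apply mul_le_mul_of_nonneg_left hYd (by positivity)
          _ = (2/sArea (n+1)) * (ρ^k * s^k * 2^(n+1)) * (lx/d^(n+1)) := by ring
          _ ≤ (2/sArea (n+1)) * (ρ^m * 2^(n+1)) * (lx/d^(n+1)) := by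
              apply mul_le_mul_of_nonneg_right _ (by positivity)
              apply mul_le_mul_of_nonneg_left _ (by positivity)
              calc ρ^k * s^k * 2^(n+1) ≤ ρ^k * 1 * 2^(n+1) := by
                    apply mul_le_mul_of_nonneg_right _ (by positivity)
                    exact mul_le_mul_of_nonneg_left (hsk1 k) (by positivity)
                _ = ρ^k * 2^(n+1) := by ring
                _ ≤ ρ^m * 2^(n+1) :=
                    mul_le_mul_of_nonneg_right (pow_le_pow_right₀ hρ1 hk'.le) (by positivity)
      rw [hmpk]
      calc |2*lx/(sArea (n+1)*d^(n+1))
            - ∑ k ∈ Finset.range m, (2*lx/(sArea (n+1) * Y^(n+1))) * (gegen lam k t * s^k)|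
          ≤ |2*lx/(sArea (n+1)*d^(n+1))|
            + |∑ k ∈ Finset.range m, (2*lx/(sArea (n+1) * Y^(n+1))) * (gegen lam k t * s^k)| :=
            habs_sub _ _
        _ ≤ 2*lx/(sArea (n+1)*d^(n+1))
            + ∑ k ∈ Finset.range m, (2*lx/(sArea (n+1) * Y^(n+1))) * (ρ^k * s^k) :=
            add_le_add (le_of_eq (abs_of_pos hpk_pos)) habs_sum
        _ ≤ (2/sArea (n+1)) * (lx/d^(n+1))
            + (m:ℝ) * ((2/sArea (n+1)) * (ρ^m * 2^(n+1)) * (lx/d^(n+1))) := by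
            apply add_le_add
            · rw [hpk_eq]
            · calc ∑ k ∈ Finset.range m, (2*lx/(sArea (n+1) * Y^(n+1))) * (ρ^k * s^k)
                  ≤ ∑ _k ∈ Finset.range m,
                      (2/sArea (n+1)) * (ρ^m * 2^(n+1)) * (lx/d^(n+1)) :=
                    Finset.sum_le_sum hterm2
                _ = (m:ℝ) * ((2/sArea (n+1)) * (ρ^m * 2^(n+1)) * (lx/d^(n+1))) := by
                    rw [Finset.sum_const, Finset.card_range, nsmul_eq_mul]
        _ = C * (lx/d^(n+1)) := by
            rw [hC_def]
            ring
        _ ≤ C * (2*ρ)^m * ((lx/d^(n+1)) * s^m) := by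
            calc C * (lx/d^(n+1)) = C * (lx/d^(n+1)) * 1 := (mul_one _).symm
              _ ≤ C * (lx/d^(n+1)) * ((2*ρ)^m * s^m) :=
                  mul_le_mul_of_nonneg_left hone (by positivity)
              _ = C * (2*ρ)^m * ((lx/d^(n+1)) * s^m) := by ring
        _ ≤ A * (lx/d^(n+1)) * s^m := by
            rw [hA_def]
            have h5 : (C + C * (2*ρ)^m + 4/sArea (n+1) * 2^(n+1) * ρ^m) * (lx/d^(n+1)) * s^m
                = (C + C * (2*ρ)^m + 4/sArea (n+1) * 2^(n+1) * ρ^m) * ((lx/d^(n+1)) * s^m) := by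
              ring
            rw [h5]
            apply mul_le_mul_of_nonneg_right _ (by positivity)
            linarith [hC0, hA3]

end
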